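/- arXiv:1905.01033 — 2 statements merged into one kernel-verified Lean document; each statement's English description precedes it below -/
import Mathlib

section
/- Let κ be an invertible n×n real matrix, β̄ an n×n real matrix, and set M(ξ) = ξ ⊙ W^{κ^{-1}β̄ − E} where W_j = 1 + ξ_j, i.e., the mapping with j-th component F_j(ξ) = ξ_j · Π_{k=1}^n W_k^{(κ^{-1}β̄ − E)_k^{(j)}}. Then the Jacobian determinant of F with respect to ξ equals W^{(κ^{-1}β̄)I − 2I} · det(E + diag[ξ] · κ^{-1}β̄), where I is the all-ones vector and W^v denotes Π_k W_k^{v_k}. -/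
open Matrix Finset

/-- The Jacobian determinant of the linearization mapping
`F_j(ξ) = ξ_j · Π_k W_k^{(κ⁻¹β̄ − E)_k^{(j)}}`, `W_k = 1 + ξ_k`, equals
`W^{(κ⁻¹β̄)I − 2I} · det(E + diag[ξ]·κ⁻¹β̄)`. -/
theorem jacobian_of_linearization (n : ℕ) (κ βbar : Matrix (Fin n) (Fin n) ℝ)
    (hκ : IsUnit κ.det) (B : Matrix (Fin n) (Fin n) ℝ) (hB : B = κ⁻¹ * βbar)
    (F : (Fin n → ℝ) → Fin n → ℝ)
    (hF : ∀ ξ j, F ξ j = ξ j * ∏ k, (1 + ξ k) ^ ((B - 1) k j))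
    (ξ : Fin n → ℝ) (hξ : ∀ k, 0 < 1 + ξ k) :
    (Matrix.of fun j i => fderiv ℝ (fun ζ => F ζ j) ξ (Pi.single i 1)).det =
      (∏ k, (1 + ξ k) ^ ((∑ j, B k j) - 2)) *
        ((1 : Matrix (Fin n) (Fin n) ℝ) + Matrix.diagonal ξ * B).det := by
  set W : Fin n → ℝ := fun k => 1 + ξ k with hW
  have hW0 : ∀ k, W k ≠ 0 := fun k => (hξ k).ne'
  set c : Fin n → Fin n → ℝ := fun j k => (B - 1) k j with hc
  set P : Fin n → ℝ := fun j => ∏ k, W k ^ (c j k) with hP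
  -- projection CLM
  let pr : Fin n → ((Fin n → ℝ) →L[ℝ] ℝ) := fun k => ContinuousLinearMap.proj k
  -- the derivative
  have hprj : ∀ k, HasFDerivAt (fun ζ : Fin n → ℝ => 1 + ζ k) (pr k) ξ := by
    intro k
    exact ((pr k).hasFDerivAt).const_add (1 : ℝ)
  have hprod : ∀ j, HasFDerivAt (fun ζ : Fin n → ℝ => ∏ k, (1 + ζ k) ^ (c j k))
      (∑ k, (∏ m ∈ Finset.univ.erase k, W m ^ (c j m)) •
        ((c j k * W k ^ (c j k - 1)) • pr k)) ξ := by
    intro j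
    exact HasFDerivAt.finset_prod fun k _ => (hprj k).rpow_const (Or.inl (hW0 k))
  have hL : ∀ j, HasFDerivAt (fun ζ => F ζ j)
      (ξ j • (∑ k, (∏ m ∈ Finset.univ.erase k, W m ^ (c j m)) •
        ((c j k * W k ^ (c j k - 1)) • pr k)) + P j • pr j) ξ := by
    intro j
    have hfun : (fun ζ => F ζ j) = fun ζ => ζ j * ∏ k, (1 + ζ k) ^ (c j k) :=
      funext fun ζ => hF ζ j
    rw [hfun]
    exact ((pr j).hasFDerivAt).mul (hprod j)
  -- entries of the Jacobian
  have hentry : ∀ j i, fderiv ℝ (fun ζ => F ζ j) ξ (Pi.single i 1) =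
      ξ j * ((∏ m ∈ Finset.univ.erase i, W m ^ (c j m)) * (c j i * W i ^ (c j i - 1)))
        + P j * (if j = i then 1 else 0) := by
    intro j i
    rw [(hL j).fderiv]
    simp only [ContinuousLinearMap.add_apply, ContinuousLinearMap.smul_apply,
      ContinuousLinearMap.sum_apply, ContinuousLinearMap.proj_apply, pr,
      Pi.single_apply, smul_eq_mul]
    rw [Finset.sum_eq_single i]
    · simp [mul_assoc]
    · intro b _ hb
      simp [if_neg hb]
    · simp
  -- rewrite the Jacobian matrix as a product
  have hfactor : (Matrix.of fun j i => fderiv ℝ (fun ζ => F ζ j) ξ (Pi.single i 1)) =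
      Matrix.diagonal P *
        (((1 : Matrix (Fin n) (Fin n) ℝ) + B * Matrix.diagonal ξ)ᵀ *
          Matrix.diagonal fun i => (W i)⁻¹) := by
    ext j i
    rw [Matrix.of_apply, hentry j i, Matrix.diagonal_mul, Matrix.mul_diagonal,
      Matrix.transpose_apply]
    have hPsplit : (∏ m ∈ Finset.univ.erase i, W m ^ (c j m)) * W i ^ (c j i) = P j := by
      rw [hP]
      exact Finset.prod_erase_mul _ _ (Finset.mem_univ i)
    have hrp : W i ^ (c j i - 1) = W i ^ (c j i) / W i := by
      rw [Real.rpow_sub (hξ i), Real.rpow_one]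
    rw [hrp]
    have h1 : ξ j * ((∏ m ∈ Finset.univ.erase i, W m ^ (c j m)) *
        (c j i * (W i ^ (c j i) / W i))) = ξ j * c j i * P j / W i := by
      rw [← hPsplit]; ring
    rw [h1, Matrix.add_apply, Matrix.mul_diagonal]
    rcases eq_or_ne i j with rfl | hij
    · have hcjj : c i i = B i i - 1 := by
        simp [hc, Matrix.sub_apply, Matrix.one_apply_eq]
      have hWj : W i = 1 + ξ i := rfl
      have h0 : (1 : ℝ) + ξ i ≠ 0 := (hξ i).ne'
      rw [hcjj, Matrix.one_apply_eq, if_pos rfl, hWj]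
      field_simp
      ring
    · have hcji : c j i = B i j := by
        simp [hc, Matrix.sub_apply, Matrix.one_apply_ne hij]
      rw [hcji, Matrix.one_apply_ne hij, if_neg (Ne.symm hij)]
      ring
  rw [hfactor, Matrix.det_mul, Matrix.det_mul, Matrix.det_diagonal, Matrix.det_diagonal,
    Matrix.det_transpose, Matrix.det_one_add_mul_comm]
  -- scalar bookkeeping
  have hPprod : (∏ j, P j) = ∏ k, W k ^ ((∑ j, B k j) - 1) := by
    rw [hP]
    rw [Finset.prod_comm]
    refine Finset.prod_congr rfl fun k _ => ?_
    rw [← Real.rpow_sum_of_pos (hξ k)]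
    congr 1
    simp only [hc, Matrix.sub_apply, Finset.sum_sub_distrib]
    congr 1
    simp [Matrix.one_apply]
  rw [hPprod]
  rw [show ((∏ i, (W i)⁻¹) = ∏ k, W k ^ (-1 : ℝ)) from
    Finset.prod_congr rfl fun k _ => (Real.rpow_neg_one (W k)).symm]
  rw [mul_comm ((1 + Matrix.diagonal ξ * B).det), ← mul_assoc, ← Finset.prod_mul_distrib]
  congr 1
  refine Finset.prod_congr rfl fun k _ => ?_
  rw [← Real.rpow_add (hξ k)]
  show W k ^ _ = W k ^ _
  congr 1
  ring
end

section
/- Let ω be a nonsingular n×n integer matrix and suppose (ξ, W) ↦ (x, y) is defined by y = W^{−ω^{-1}} (i.e., y_j = Π_i W_i^{−(ω^{-1})_i^{(j)}}) and x = ξ ⊙ W^{ω^{-1}σ − E} with W = ξ + I. Then y satisfies the reduced trinomial system y^{ω^{(i)}} + x_i y^{σ^{(i)}} − 1 = 0 for i = 1,…,n. -/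
open Matrix Finset

lemma prod_zpow_aux (n : ℕ) (W : Fin n → ℝ) (hW : ∀ k, 0 < W k)
    (A : Matrix (Fin n) (Fin n) ℝ) (y : Fin n → ℝ)
    (hy : ∀ j, y j = ∏ k, W k ^ (-(A k j))) (c : Fin n → ℤ) :
    ∏ j, y j ^ (c j) = ∏ k, W k ^ (-(∑ j, A k j * c j)) := by
  have h1 : ∀ j, y j ^ (c j) = ∏ k, W k ^ (-(A k j) * c j) := by
    intro j
    rw [← Real.rpow_intCast (y j) (c j), hy j,
      ← Real.finset_prod_rpow _ _ (fun k _ => (Real.rpow_nonneg (hW k).le _)),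
      ]
    refine Finset.prod_congr rfl fun k _ => ?_
    rw [← Real.rpow_mul (hW k).le]
  simp_rw [h1]
  rw [Finset.prod_comm]
  refine Finset.prod_congr rfl fun k _ => ?_
  rw [← Real.rpow_sum_of_pos (hW k)]
  congr 1
  simp [neg_mul]

/-- The linearization `y = W^{−ω⁻¹}`, `x = ξ ⊙ W^{ω⁻¹σ − E}` (with `W = ξ + I`)
produces a solution of the reduced trinomial system
`y^{ω^{(i)}} + x_i y^{σ^{(i)}} − 1 = 0`, `i = 1,…,n`. -/
theorem linearization_solves_reduced_system (n : ℕ) (ω σ : Matrix (Fin n) (Fin n) ℤ)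
    (hω : ω.det ≠ 0) (ξ : Fin n → ℝ) (hξ : ∀ k, 0 < 1 + ξ k)
    (M : Matrix (Fin n) (Fin n) ℝ)
    (hM : M = (ω.map (Int.cast : ℤ → ℝ))⁻¹ * σ.map (Int.cast : ℤ → ℝ))
    (y x : Fin n → ℝ)
    (hy : ∀ j, y j = ∏ i, (1 + ξ i) ^ (-((ω.map (Int.cast : ℤ → ℝ))⁻¹ i j)))
    (hx : ∀ i, x i = ξ i * ∏ k, (1 + ξ k) ^ ((M - 1) k i)) :
    ∀ i, (∏ j, y j ^ (ω j i)) + x i * (∏ j, y j ^ (σ j i)) - 1 = 0 := by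
  intro i
  set W : Fin n → ℝ := fun k => 1 + ξ k with hW
  set A : Matrix (Fin n) (Fin n) ℝ := (ω.map (Int.cast : ℤ → ℝ))⁻¹ with hA
  have hdet : IsUnit (ω.map (Int.cast : ℤ → ℝ)).det := by
    have : (ω.map (Int.cast : ℤ → ℝ)).det = (ω.det : ℝ) := by
      rw [show ω.map (Int.cast : ℤ → ℝ) = (Int.castRingHom ℝ).mapMatrix ω from rfl,
        ← RingHom.map_det]
      rfl
    rw [this]
    exact isUnit_iff_ne_zero.2 (by exact_mod_cast hω)
  have hAω : A * ω.map (Int.cast : ℤ → ℝ) = 1 := Matrix.nonsing_inv_mul _ hdet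
  -- first product
  have h1 : (∏ j, y j ^ (ω j i)) = (W i)⁻¹ := by
    rw [prod_zpow_aux n W hξ A y hy (fun j => ω j i)]
    have : ∀ k, ∑ j, A k j * (ω j i : ℝ) = (1 : Matrix (Fin n) (Fin n) ℝ) k i := by
      intro k
      rw [← hAω]
      simp [Matrix.mul_apply, Matrix.map_apply]
    simp_rw [this]
    rw [Finset.prod_eq_single i (fun k _ hk => by
        simp [Matrix.one_apply_ne hk]) (by simp)]
    rw [Matrix.one_apply_eq]
    rw [Real.rpow_neg (hξ i).le, Real.rpow_one]
  -- second product
  have h2 : (∏ j, y j ^ (σ j i)) = ∏ k, W k ^ (-(M k i)) := by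
    rw [prod_zpow_aux n W hξ A y hy (fun j => σ j i)]
    refine Finset.prod_congr rfl fun k _ => ?_
    congr 1
    rw [hM, Matrix.mul_apply]
    simp [Matrix.map_apply, hA]
  have h3 : x i * (∏ j, y j ^ (σ j i)) = ξ i * (W i)⁻¹ := by
    rw [h2, hx i, mul_assoc, ← Finset.prod_mul_distrib]
    congr 1
    have : ∀ k, W k ^ ((M - 1) k i) * W k ^ (-(M k i))
        = W k ^ (-(1 : Matrix (Fin n) (Fin n) ℝ) k i) := by
      intro k
      rw [← Real.rpow_add (hξ k)]
      congr 1
      simp [Matrix.sub_apply]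
      ring
    refine (Finset.prod_congr rfl fun k _ => this k).trans ?_
    rw [Finset.prod_eq_single i (fun k _ hk => by
        simp [Matrix.one_apply_ne hk]) (by simp)]
    rw [Matrix.one_apply_eq, Real.rpow_neg (hξ i).le, Real.rpow_one]
  rw [h1, h3]
  have hne : W i ≠ 0 := (hξ i).ne'
  field_simp
  simp [hW]
end
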